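/- The Bellman optimality operator T has a unique fixed point v* (i.e., v* is the unique function with T v* = v*), and value iteration converges to it geometrically: for every v₀ : S → ℝ and every n ∈ ℕ, ‖T^[n] v₀ − v*‖_∞ ≤ β^n · ‖v₀ − v*‖_∞; consequently the sequence of iterates T^[n] v₀ converges to v* for every initial v₀. -/

import Mathlib

open Filter

/-- The Bellman optimality operator of a finite MDP has a unique fixed point `v*`,
and value iteration converges to it geometrically from any starting point. -/
theorem bellman_unique_fixed_point_value_iteration
    {S A : Type*} [Fintype S] [Nonempty S] [Fintype A] [Nonempty A]
    (β : ℝ) (hβ0 : 0 ≤ β) (hβ1 : β < 1)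
    (c : S → A → ℝ) (P : S → A → S → ℝ)
    (hP0 : ∀ s a s', 0 ≤ P s a s') (hP1 : ∀ s a, ∑ s', P s a s' = 1)
    (T : (S → ℝ) → (S → ℝ))
    (hT : ∀ v s, T v s = Finset.univ.inf' Finset.univ_nonempty
          (fun a => c s a + β * ∑ s', P s a s' * v s')) :
    ∃ vstar : S → ℝ, T vstar = vstar ∧ (∀ v : S → ℝ, T v = v → v = vstar) ∧
      ∀ v₀ : S → ℝ,
        (∀ n : ℕ, ‖T^[n] v₀ - vstar‖ ≤ β ^ n * ‖v₀ - vstar‖) ∧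
        Tendsto (fun n : ℕ => T^[n] v₀) atTop (nhds vstar) := by
  -- Key pointwise estimate
  have key : ∀ v w : S → ℝ, ∀ s, T v s - T w s ≤ β * ‖v - w‖ := by
    intro v w s
    rw [hT, hT]
    obtain ⟨a, -, ha⟩ := Finset.exists_mem_eq_inf' (Finset.univ_nonempty (α := A))
      (fun a => c s a + β * ∑ s', P s a s' * w s')
    rw [ha]
    have h1 : Finset.univ.inf' Finset.univ_nonempty
        (fun a => c s a + β * ∑ s', P s a s' * v s')
        ≤ c s a + β * ∑ s', P s a s' * v s' :=
      Finset.inf'_le _ (Finset.mem_univ a)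
    have h2 : (∑ s', P s a s' * v s') - (∑ s', P s a s' * w s') ≤ ‖v - w‖ := by
      rw [← Finset.sum_sub_distrib]
      calc ∑ s', (P s a s' * v s' - P s a s' * w s')
          ≤ ∑ s', P s a s' * ‖v - w‖ := by
            apply Finset.sum_le_sum
            intro i _
            rw [← mul_sub]
            refine mul_le_mul_of_nonneg_left ?_ (hP0 s a i)
            calc v i - w i ≤ |v i - w i| := le_abs_self _
              _ = ‖(v - w) i‖ := by simp [Real.norm_eq_abs]
              _ ≤ ‖v - w‖ := norm_le_pi_norm _ i
        _ = ‖v - w‖ := by rw [← Finset.sum_mul, hP1, one_mul]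
    nlinarith [h1]
  have hdist : ∀ v w : S → ℝ, dist (T v) (T w) ≤ β * dist v w := by
    intro v w
    rw [dist_pi_le_iff (by positivity : (0:ℝ) ≤ β * dist v w)]
    intro s
    rw [Real.dist_eq, abs_sub_le_iff, dist_eq_norm]
    exact ⟨key v w s, by simpa [norm_sub_rev] using key w v s⟩
  have hlip : LipschitzWith ⟨β, hβ0⟩ T := by
    apply LipschitzWith.of_dist_le_mul
    intro v w
    exact hdist v w
  have hcontr : ContractingWith ⟨β, hβ0⟩ T := ⟨by exact_mod_cast hβ1, hlip⟩
  refine ⟨hcontr.fixedPoint, hcontr.fixedPoint_isFixedPt, ?_, ?_⟩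
  · intro v hv
    exact hcontr.fixedPoint_unique hv
  · intro v₀
    have hiter : ∀ n : ℕ, dist (T^[n] v₀) hcontr.fixedPoint
        ≤ β ^ n * dist v₀ hcontr.fixedPoint := by
      intro n
      induction n with
      | zero => simp
      | succ n ih =>
        have : T^[n+1] v₀ = T (T^[n] v₀) := Function.iterate_succ_apply' T n v₀
        rw [this, pow_succ]
        calc dist (T (T^[n] v₀)) hcontr.fixedPoint
            = dist (T (T^[n] v₀)) (T hcontr.fixedPoint) := by
              rw [hcontr.fixedPoint_isFixedPt]
          _ ≤ β * dist (T^[n] v₀) hcontr.fixedPoint := hdist _ _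
          _ ≤ β * (β ^ n * dist v₀ hcontr.fixedPoint) :=
              mul_le_mul_of_nonneg_left ih hβ0
          _ = β ^ n * β * dist v₀ hcontr.fixedPoint := by ring
    constructor
    · intro n
      simpa [dist_eq_norm] using hiter n
    · exact hcontr.tendsto_iterate_fixedPoint v₀
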